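/- Let A be a set of k ≥ 4 nonnegative integers with 0 ∈ A, let r be a positive integer, and let H = {h_1, …, h_t} be a set of t ≥ 1 positive integers with (k−2)r ≤ h_1 < h_2 < ⋯ < h_t ≤ (k−1)r. Then |H^{(r)}A| ≥ m_1·r·(k − m_1) + (h_1 − m_1·r)·(k − 2m_1 − 1) + t, where m_1 = ⌊h_1/r⌋. -/

import Mathlib

/-- The generalized `h`-fold sumset `h^(r)A`: all sums of `h` elements of `A`
where every summand appears at most `r` times. -/
def genSumset (r h : ℕ) (A : Finset ℤ) : Set ℤ :=
  {x | ∃ lam : ℤ → ℕ, (∀ a, lam a ≤ r) ∧ (∀ a ∉ A, lam a = 0) ∧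
    (∑ a ∈ A, lam a) = h ∧ (∑ a ∈ A, (lam a : ℤ) * a) = x}

/-- The generalized `H`-fold sumset `H^(r)A = ⋃_{h ∈ H} h^(r)A`. -/
def HSumset (r : ℕ) (H : Finset ℕ) (A : Finset ℤ) : Set ℤ :=
  ⋃ h ∈ H, genSumset r h A

open Finset

lemma sum_two_support {M : Type*} [AddCommMonoid M] (F : ℕ → M) (p q k : ℕ)
    (hpq : p < q) (hqk : q < k) (hF : ∀ i, i ≠ p → i ≠ q → F i = 0) :
    ∑ i ∈ range k, F i = F p + F q := by
  rw [← Finset.sum_pair (by omega : p ≠ q)]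
  apply (Finset.sum_subset _ _).symm
  · intro x hx
    simp at hx
    simp
    rcases hx with h | h <;> omega
  · intro x _ hx
    simp at hx
    exact hF x hx.1 hx.2


lemma sum_three_support' {M : Type*} [AddCommMonoid M] (F : ℕ → M) (p q l k : ℕ)
    (hpq : p < q) (hql : q < l) (hlk : l < k) (hF : ∀ i, i ≠ p → i ≠ q → i ≠ l → F i = 0) :
    ∑ i ∈ range k, F i = F p + F q + F l := by
  have : ∑ i ∈ ({p, q, l} : Finset ℕ), F i = F p + F q + F l := by
    rw [Finset.sum_insert (by simp; omega), Finset.sum_insert (by simp; omega),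
      Finset.sum_singleton, add_assoc]
  rw [← this]
  apply (Finset.sum_subset _ _).symm
  · intro x hx
    simp at hx
    simp
    rcases hx with h | h | h <;> omega
  · intro x _ hx
    simp at hx
    exact hF x hx.1 hx.2.1 hx.2.2


lemma mem_of_config (r k h' : ℕ) (A : Finset ℤ) (a : ℕ → ℤ)
    (hA : A = (Finset.range k).image a) (hinj : Set.InjOn a (Finset.range k))
    (c : ℕ → ℕ) (hcr : ∀ i, c i ≤ r) (hsum : ∑ i ∈ range k, c i = h') :
    (∑ i ∈ range k, (c i : ℤ) * a i) ∈ genSumset r h' A := by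
  classical
  refine ⟨fun x => ∑ i ∈ range k, if a i = x then c i else 0, ?_, ?_, ?_, ?_⟩
  · intro x
    by_cases hx : ∃ i ∈ range k, a i = x
    · obtain ⟨i0, hi0, hai0⟩ := hx
      have : (∑ i ∈ range k, if a i = x then c i else 0) = c i0 := by
        rw [Finset.sum_eq_single_of_mem i0 hi0]
        · simp [hai0]
        · intro j hj hne
          have : a j ≠ x := by
            intro hax
            exact hne (hinj (by simpa using hj) (by simpa using hi0) (hax.trans hai0.symm))
          simp [this]
      exact this.trans_le (hcr i0)
    · push_neg at hx
      have : (∑ i ∈ range k, if a i = x then c i else 0) = 0 := by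
        apply Finset.sum_eq_zero
        intro j hj
        simp [hx j hj]
      exact this.trans_le (Nat.zero_le r)
  · intro x hx
    apply Finset.sum_eq_zero
    intro j hj
    have : a j ∈ A := by rw [hA]; exact Finset.mem_image_of_mem a hj
    have : a j ≠ x := fun hax => hx (hax ▸ this)
    simp [this]
  · beta_reduce
    rw [Finset.sum_comm]
    rw [← hsum]
    apply Finset.sum_congr rfl
    intro i hi
    have hai : a i ∈ A := by rw [hA]; exact Finset.mem_image_of_mem a hi
    rw [Finset.sum_ite_eq A (a i) (fun _ => c i)]
    simp [hai]
  · have : ∀ x ∈ A, ((∑ i ∈ range k, if a i = x then c i else 0 : ℕ) : ℤ) * x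
        = ∑ i ∈ range k, if a i = x then (c i : ℤ) * x else 0 := by
      intro x _
      push_cast
      rw [Finset.sum_mul]
      apply Finset.sum_congr rfl
      intro i _
      split <;> simp
    beta_reduce
    rw [Finset.sum_congr rfl this, Finset.sum_comm]
    apply Finset.sum_congr rfl
    intro i hi
    have hai : a i ∈ A := by rw [hA]; exact Finset.mem_image_of_mem a hi
    have : (∑ x ∈ A, if a i = x then (c i : ℤ) * x else 0) = (c i : ℤ) * a i := by
      rw [Finset.sum_ite_eq A (a i) (fun x => (c i : ℤ) * x)]
      simp [hai]
    rw [this]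

lemma compl_mem (r k g : ℕ) (A : Finset ℤ) (a : ℕ → ℤ)
    (hA : A = (Finset.range k).image a) (hinj : Set.InjOn a (Finset.range k))
    (c : ℕ → ℕ) (hcr : ∀ i, c i ≤ r) (hsum : ∑ i ∈ range k, c i = g) :
    ((r : ℤ) * ∑ i ∈ range k, a i) - (∑ i ∈ range k, (c i : ℤ) * a i)
      ∈ genSumset r (k * r - g) A := by
  have hg : g ≤ k * r := by
    rw [← hsum]
    calc ∑ i ∈ range k, c i ≤ ∑ _i ∈ range k, r := Finset.sum_le_sum (fun i _ => hcr i)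
    _ = k * r := by simp [mul_comm]
  have hsum' : ∑ i ∈ range k, (r - c i) = k * r - g := by
    have h1 : ∑ i ∈ range k, (r - c i) + ∑ i ∈ range k, c i = k * r := by
      rw [← Finset.sum_add_distrib]
      have : ∀ i ∈ range k, r - c i + c i = r := fun i _ => Nat.sub_add_cancel (hcr i)
      rw [Finset.sum_congr rfl this]
      simp [mul_comm]
    omega
  have hval : ∑ i ∈ range k, ((r - c i : ℕ) : ℤ) * a i
      = ((r : ℤ) * ∑ i ∈ range k, a i) - (∑ i ∈ range k, (c i : ℤ) * a i) := by
    have : ∀ i ∈ range k, ((r - c i : ℕ) : ℤ) * a i = (r : ℤ) * a i - (c i : ℤ) * a i := by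
      intro i _
      rw [Nat.cast_sub (hcr i)]
      ring
    rw [Finset.sum_congr rfl this, Finset.sum_sub_distrib, Finset.mul_sum]
  have := mem_of_config r k (k * r - g) A a hA hinj (fun i => r - c i)
    (fun i => Nat.sub_le r (c i)) hsum'
  rwa [hval] at this

lemma HS_fin (r : ℕ) (H : Finset ℕ) (A : Finset ℤ) (hAnn : ∀ x ∈ A, 0 ≤ x) :
    (HSumset r H A).Finite := by
  apply Set.Finite.subset (Set.finite_Icc (0 : ℤ) ((r : ℤ) * ∑ x ∈ A, x))
  intro x hx
  simp only [HSumset, Set.mem_iUnion, genSumset, Set.mem_setOf_eq] at hx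
  obtain ⟨h', _, lam, hlr, _, _, hval⟩ := hx
  rw [Set.mem_Icc, ← hval]
  constructor
  · apply Finset.sum_nonneg
    intro y hy
    exact mul_nonneg (by positivity) (hAnn y hy)
  · rw [Finset.mul_sum]
    apply Finset.sum_le_sum
    intro y hy
    apply mul_le_mul_of_nonneg_right _ (hAnn y hy)
    exact_mod_cast hlr y

-- u=0 chain: weight r
lemma chain0 (r k : ℕ) (a : ℕ → ℤ) (hr : 1 ≤ r)
    (ha : ∀ i j : ℕ, i < j → j < k → a i < a j) (ha0 : a 0 = 0) :
    ∀ j : ℕ, 1 ≤ j → j ≤ k →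
    ∃ V : Finset ℤ, V.card = r * (j - 1) + 1 ∧
      (∀ x ∈ V, 0 ≤ x ∧ x ≤ (r : ℤ) * a (j - 1)) ∧
      (∀ x ∈ V, ∃ c : ℕ → ℕ, (∀ i, c i ≤ r) ∧ (∀ i, j ≤ i → c i = 0) ∧
        (∑ i ∈ range k, c i = r) ∧ (∑ i ∈ range k, (c i : ℤ) * a i = x)) := by
  have hnn : ∀ i, i < k → 0 ≤ a i := by
    intro i hik
    rcases Nat.eq_zero_or_pos i with h | h
    · simp [h, ha0]
    · have := ha 0 i h hik
      rw [ha0] at this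
      exact this.le
  intro j hj1
  induction j, hj1 using Nat.le_induction with
  | base =>
    intro _
    refine ⟨{0}, by simp, by simp [ha0], ?_⟩
    intro x hx
    simp at hx
    subst hx
    refine ⟨fun i => if i = 0 then r else 0, ?_, ?_, ?_, ?_⟩
    · intro i; dsimp only; split <;> simp
    · intro i hi
      have : i ≠ 0 := by omega
      simp [this]
    · rw [Finset.sum_eq_single_of_mem 0 (by simp; omega)]
      · simp
      · intro j _ hj; simp [hj]
    · apply Finset.sum_eq_zero
      intro i _
      by_cases hi : i = 0 <;> simp [hi, ha0]
  | succ j hj ih =>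
    intro hjk
    obtain ⟨V, hVcard, hVbd, hVmem⟩ := ih (by omega)
    set G : ℕ → ℤ := fun n => ((r : ℤ) - 1 - n) * a (j - 1) + ((n : ℤ) + 1) * a j with hG
    have haj : a (j - 1) < a j := ha _ _ (by omega) (by omega)
    have hajnn : 0 ≤ a (j - 1) := hnn _ (by omega)
    have hGgt : ∀ n : ℕ, n < r → (r : ℤ) * a (j - 1) < G n := by
      intro n hn
      have : G n - (r : ℤ) * a (j - 1) = ((n : ℤ) + 1) * (a j - a (j - 1)) := by
        simp only [hG]; ring
      nlinarith [mul_pos (by positivity : (0:ℤ) < (n:ℤ)+1) (by linarith : (0:ℤ) < a j - a (j-1))]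
    have hGle : ∀ n : ℕ, n < r → G n ≤ (r : ℤ) * a j := by
      intro n hn
      have h1 : (0:ℤ) ≤ ((r : ℤ) - 1 - n) * (a j - a (j - 1)) := by
        apply mul_nonneg
        · have : (n:ℤ) ≤ (r:ℤ) - 1 := by exact_mod_cast Nat.le_sub_one_of_lt hn
          linarith
        · linarith
      simp only [hG]
      nlinarith
    have hGmono : ∀ m n : ℕ, m < n → n < r → G m < G n := by
      intro m n hmn hn
      have e : G n - G m = ((n : ℤ) - m) * (a j - a (j - 1)) := by simp only [hG]; ring
      have hd : (0:ℤ) < (n:ℤ) - (m:ℤ) := by omega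
      have := mul_pos hd (by linarith : (0:ℤ) < a j - a (j-1))
      linarith
    set W : Finset ℤ := (range r).image G with hW
    have hWcard : W.card = r := by
      rw [hW, Finset.card_image_of_injOn, Finset.card_range]
      intro m hm n hn hmn
      simp at hm hn
      by_contra hne
      rcases Nat.lt_or_ge m n with h | h
      · exact absurd hmn (hGmono m n h hn).ne
      · have := hGmono n m (by omega) hm
        exact absurd hmn.symm this.ne
    have hdisj : Disjoint V W := by
      rw [Finset.disjoint_right]
      intro x hxW hxV
      simp [hW] at hxW
      obtain ⟨n, hn, hGn⟩ := hxW
      have h1 := (hVbd x hxV).2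
      have h2 := hGgt n hn
      rw [hGn] at h2
      linarith
    refine ⟨V ∪ W, ?_, ?_, ?_⟩
    · rw [Finset.card_union_of_disjoint hdisj, hVcard, hWcard]
      have e : j + 1 - 1 = (j - 1) + 1 := by omega
      rw [e, Nat.mul_succ]
      ring
    · intro x hx
      rcases Finset.mem_union.mp hx with hx | hx
      · obtain ⟨h1, h2⟩ := hVbd x hx
        have : (r:ℤ) * a (j-1) ≤ (r:ℤ) * a j := by
          apply mul_le_mul_of_nonneg_left haj.le (by positivity)
        simp only [Nat.add_sub_cancel]
        exact ⟨h1, by linarith⟩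
      · simp [hW] at hx
        obtain ⟨n, hn, hGn⟩ := hx
        simp only [Nat.add_sub_cancel]
        constructor
        · have := hGgt n hn
          nlinarith [mul_nonneg (by positivity : (0:ℤ) ≤ (r:ℤ)) hajnn]
        · rw [← hGn]; exact hGle n hn
    · intro x hx
      rcases Finset.mem_union.mp hx with hx | hx
      · obtain ⟨c, h1, h2, h3, h4⟩ := hVmem x hx
        exact ⟨c, h1, fun i hi => h2 i (by omega), h3, h4⟩
      · simp [hW] at hx
        obtain ⟨n, hn, hGn⟩ := hx
        refine ⟨fun i => if i = j - 1 then r - 1 - n else if i = j then n + 1 else 0, ?_, ?_, ?_, ?_⟩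
        · intro i; dsimp only
          split
          · omega
          · split <;> omega
        · intro i hi
          have h1 : i ≠ j - 1 := by omega
          have h2 : i ≠ j := by omega
          simp [h1, h2]
        · rw [sum_two_support _ (j-1) j k (by omega) (by omega)]
          · have hne : j ≠ j - 1 := by omega
            simp only [if_pos rfl, if_neg hne]
            simp
            omega
          · intro i h1 h2; simp [h1, h2]
        · rw [sum_two_support _ (j-1) j k (by omega) (by omega)]
          · have hv1 : (if j - 1 = j - 1 then r - 1 - n else if j - 1 = j then n + 1 else 0) = r - 1 - n := by simp
            have hv2 : (if j = j - 1 then r - 1 - n else if j = j then n + 1 else 0) = n + 1 := by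
              rw [if_neg (by omega), if_pos rfl]
            dsimp only
            rw [hv1, hv2, ← hGn]
            simp only [hG]
            have c1 : ((r - 1 - n : ℕ) : ℤ) = (r:ℤ) - 1 - n := by omega
            rw [c1]
            push_cast
            ring
          · intro i h1 h2; simp [h1, h2]

lemma chain1 (r u k : ℕ) (a : ℕ → ℤ) (hr : 1 ≤ r) (hu : 1 ≤ u) (hur : u ≤ r)
    (ha : ∀ i j : ℕ, i < j → j < k → a i < a j) (ha0 : a 0 = 0) :
    ∀ j : ℕ, 3 ≤ j → j ≤ k →
    ∃ V : Finset ℤ, V.card = r * (j - 1) + u * (j - 3) + 1 ∧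
      (∀ x ∈ V, (u : ℤ) * a 1 ≤ x ∧ x ≤ (r : ℤ) * a (j - 1) + (u : ℤ) * a (j - 2)) ∧
      (∀ x ∈ V, ∃ c : ℕ → ℕ, (∀ i, c i ≤ r) ∧ (∀ i, j ≤ i → c i = 0) ∧
        (∑ i ∈ range k, c i = r + u) ∧ (∑ i ∈ range k, (c i : ℤ) * a i = x)) := by
  have hle : ∀ p q : ℕ, p ≤ q → q < k → a p ≤ a q := by
    intro p q hpq hqk
    rcases Nat.eq_or_lt_of_le hpq with h | h
    · rw [h]
    · exact (ha p q h hqk).le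
  have hnn : ∀ i, i < k → 0 ≤ a i := by
    intro i hik
    have := hle 0 i (Nat.zero_le i) hik
    rwa [ha0] at this
  intro j hj3
  induction j, hj3 using Nat.le_induction with
  | base =>
    intro h3k
    have ha1 : (0:ℤ) < a 1 := by have := ha 0 1 (by omega) (by omega); rwa [ha0] at this
    have ha12 : a 1 < a 2 := ha 1 2 (by omega) (by omega)
    have ha2 : (0:ℤ) < a 2 := lt_trans ha1 ha12
    set B : ℕ → ℤ := fun n =>
      if n % 2 = 0 then (u:ℤ) * a 1 + ((n/2 : ℕ) : ℤ) * a 2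
      else (u:ℤ) * a 1 - a 1 + (((n/2 : ℕ) : ℤ) + 1) * a 2 with hB
    have hBmono : ∀ m n : ℕ, m < n → n < 2*r+1 → B m < B n := by
      intro m n hmn hn
      by_cases hm2 : m % 2 = 0 <;> by_cases hn2 : n % 2 = 0
      · simp only [hB, if_pos hm2, if_pos hn2]
        have hpq : ((m/2 : ℕ) : ℤ) < ((n/2 : ℕ) : ℤ) := by omega
        have := mul_lt_mul_of_pos_right hpq ha2
        linarith
      · simp only [hB, if_pos hm2, if_neg hn2]
        have hpq : (1:ℤ) ≤ ((n/2 : ℕ) : ℤ) + 1 - ((m/2 : ℕ) : ℤ) := by omega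
        have := mul_le_mul_of_nonneg_right hpq ha2.le
        nlinarith
      · simp only [hB, if_neg hm2, if_pos hn2]
        have hpq : (0:ℤ) ≤ ((n/2 : ℕ) : ℤ) - ((m/2 : ℕ) : ℤ) - 1 := by omega
        have := mul_le_mul_of_nonneg_right hpq ha2.le
        nlinarith
      · simp only [hB, if_neg hm2, if_neg hn2]
        have hpq : ((m/2 : ℕ) : ℤ) < ((n/2 : ℕ) : ℤ) := by omega
        have := mul_lt_mul_of_pos_right hpq ha2
        linarith
    refine ⟨(range (2*r+1)).image B, ?_, ?_, ?_⟩
    · rw [Finset.card_image_of_injOn, Finset.card_range]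
      · have : 3 - 1 = 2 := rfl
        simp
        ring
      · intro m hm n hn hmn
        simp at hm hn
        by_contra hne
        rcases Nat.lt_or_ge m n with hlt | hge
        · exact absurd hmn (hBmono m n hlt (by omega)).ne
        · exact absurd hmn.symm (hBmono n m (by omega) (by omega)).ne
    · intro x hx
      simp at hx
      obtain ⟨n, hn, hBn⟩ := hx
      have hn2r : ((n/2 : ℕ) : ℤ) ≤ (r:ℤ) := by omega
      constructor
      · rw [← hBn]
        by_cases hn2 : n % 2 = 0
        · simp only [hB, if_pos hn2]
          nlinarith [mul_nonneg (by positivity : (0:ℤ) ≤ ((n/2:ℕ):ℤ)) ha2.le]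
        · simp only [hB, if_neg hn2]
          have h1 : (1:ℤ) ≤ ((n/2:ℕ):ℤ) + 1 := by omega
          have := mul_le_mul_of_nonneg_right h1 ha2.le
          nlinarith
      · rw [← hBn]
        have e31 : (3:ℕ) - 1 = 2 := rfl
        have e32 : (3:ℕ) - 2 = 1 := rfl
        rw [e31, e32]
        by_cases hn2 : n % 2 = 0
        · simp only [hB, if_pos hn2]
          have := mul_le_mul_of_nonneg_right hn2r ha2.le
          linarith
        · simp only [hB, if_neg hn2]
          have h1 : ((n/2:ℕ):ℤ) + 1 ≤ (r:ℤ) := by omega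
          have := mul_le_mul_of_nonneg_right h1 ha2.le
          linarith
    · intro x hx
      simp at hx
      obtain ⟨n, hn, hBn⟩ := hx
      by_cases hn2 : n % 2 = 0
      · set c : ℕ → ℕ := fun i => if i = 0 then r - n/2 else if i = 1 then u else if i = 2 then n/2 else 0 with hc
        have hcp : c 0 = r - n/2 := if_pos rfl
        have hcq : c 1 = u := by
          simp only [hc]
          rw [if_neg (by omega : ¬ (1 = 0))]
          simp
        have hcl : c 2 = n/2 := by
          simp only [hc]
          rw [if_neg (by omega : ¬ (2 = 0)), if_neg (by omega : ¬ (2 = 1))]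
          simp
        have hco : ∀ i, i ≠ 0 → i ≠ 1 → i ≠ 2 → c i = 0 := by
          intro i h1 h2 h3
          simp only [hc]
          rw [if_neg h1, if_neg h2, if_neg h3]
        refine ⟨c, ?_, ?_, ?_, ?_⟩
        · intro i
          by_cases h1 : i = 0
          · subst h1; rw [hcp]; omega
          by_cases h2 : i = 1
          · subst h2; rw [hcq]; omega
          by_cases h3 : i = 2
          · subst h3; rw [hcl]; omega
          rw [hco i h1 h2 h3]; omega
        · intro i hi
          exact hco i (by omega) (by omega) (by omega)
        · rw [sum_three_support' c 0 1 2 k (by omega) (by omega) (by omega) hco,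
            hcp, hcq, hcl]
          omega
        · rw [sum_three_support' (fun i => (c i : ℤ) * a i) 0 1 2 k (by omega) (by omega) (by omega)
            (by intro i h1 h2 h3; simp [hco i h1 h2 h3])]
          simp only [hcp, hcq, hcl, ha0, mul_zero, zero_add]
          rw [← hBn]
          simp only [hB, if_pos hn2]
      · set c : ℕ → ℕ := fun i => if i = 0 then r - n/2 else if i = 1 then u - 1 else if i = 2 then n/2 + 1 else 0 with hc
        have hcp : c 0 = r - n/2 := if_pos rfl
        have hcq : c 1 = u - 1 := by
          simp only [hc]
          rw [if_neg (by omega : ¬ (1 = 0))]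
          simp
        have hcl : c 2 = n/2 + 1 := by
          simp only [hc]
          rw [if_neg (by omega : ¬ (2 = 0)), if_neg (by omega : ¬ (2 = 1))]
          simp
        have hco : ∀ i, i ≠ 0 → i ≠ 1 → i ≠ 2 → c i = 0 := by
          intro i h1 h2 h3
          simp only [hc]
          rw [if_neg h1, if_neg h2, if_neg h3]
        refine ⟨c, ?_, ?_, ?_, ?_⟩
        · intro i
          by_cases h1 : i = 0
          · subst h1; rw [hcp]; omega
          by_cases h2 : i = 1
          · subst h2; rw [hcq]; omega
          by_cases h3 : i = 2
          · subst h3; rw [hcl]; omega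
          rw [hco i h1 h2 h3]; omega
        · intro i hi
          exact hco i (by omega) (by omega) (by omega)
        · rw [sum_three_support' c 0 1 2 k (by omega) (by omega) (by omega) hco,
            hcp, hcq, hcl]
          omega
        · rw [sum_three_support' (fun i => (c i : ℤ) * a i) 0 1 2 k (by omega) (by omega) (by omega)
            (by intro i h1 h2 h3; simp [hco i h1 h2 h3])]
          simp only [hcp, hcq, hcl, ha0, mul_zero, zero_add]
          rw [← hBn]
          simp only [hB, if_neg hn2]
          have c1 : ((u - 1 : ℕ) : ℤ) = (u:ℤ) - 1 := by omega
          have c2 : ((n/2 + 1 : ℕ) : ℤ) = ((n/2 : ℕ):ℤ) + 1 := by push_cast; ring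
          rw [c1, c2]
          ring
  | succ j hj ih =>
    intro hjk
    obtain ⟨V, hVcard, hVbd, hVmem⟩ := ih (by omega)
    have h12 : a (j-2) < a (j-1) := ha _ _ (by omega) (by omega)
    have h23 : a (j-1) < a j := ha _ _ (by omega) (by omega)
    have hnn2 : (0:ℤ) ≤ a (j-2) := hnn _ (by omega)
    have hnn1 : (0:ℤ) ≤ a (j-1) := hnn _ (by omega)
    set G : ℕ → ℤ := fun n =>
      if n < r then (u:ℤ) * a (j-2) + ((r:ℤ) - 1 - n) * a (j-1) + ((n:ℤ) + 1) * a j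
      else ((u:ℤ) + (r:ℤ) - 1 - n) * a (j-2) + ((n:ℤ) - r + 1) * a (j-1) + (r:ℤ) * a j with hG
    have hGgt : ∀ n : ℕ, n < r + u →
        (r:ℤ) * a (j-1) + (u:ℤ) * a (j-2) < G n := by
      intro n hn
      by_cases hnr : n < r
      · have e : G n - ((r:ℤ) * a (j-1) + (u:ℤ) * a (j-2))
            = ((n:ℤ) + 1) * (a j - a (j-1)) := by
          simp only [hG, if_pos hnr]; ring
        have := mul_pos (by positivity : (0:ℤ) < (n:ℤ)+1) (by linarith : (0:ℤ) < a j - a (j-1))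
        linarith
      · have e : G n - ((r:ℤ) * a (j-1) + (u:ℤ) * a (j-2))
            = ((n:ℤ) - r + 1) * (a (j-1) - a (j-2)) + (r:ℤ) * (a j - a (j-1)) := by
          simp only [hG, if_neg hnr]; ring
        have t1 := mul_pos (by omega : (0:ℤ) < (n:ℤ) - r + 1) (by linarith : (0:ℤ) < a (j-1) - a (j-2))
        have t2 := mul_pos (by exact_mod_cast hr : (0:ℤ) < (r:ℤ)) (by linarith : (0:ℤ) < a j - a (j-1))
        linarith
    have hGle : ∀ n : ℕ, n < r + u → G n ≤ (r:ℤ) * a j + (u:ℤ) * a (j-1) := by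
      intro n hn
      by_cases hnr : n < r
      · have e : (r:ℤ) * a j + (u:ℤ) * a (j-1) - G n
            = (u:ℤ) * (a (j-1) - a (j-2)) + ((r:ℤ) - 1 - n) * (a j - a (j-1)) := by
          simp only [hG, if_pos hnr]; ring
        have t1 := mul_nonneg (by positivity : (0:ℤ) ≤ (u:ℤ)) (by linarith : (0:ℤ) ≤ a (j-1) - a (j-2))
        have t2 := mul_nonneg (by omega : (0:ℤ) ≤ (r:ℤ) - 1 - n) (by linarith : (0:ℤ) ≤ a j - a (j-1))
        linarith
      · have e : (r:ℤ) * a j + (u:ℤ) * a (j-1) - G n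
            = ((u:ℤ) + r - 1 - n) * (a (j-1) - a (j-2)) := by
          simp only [hG, if_neg hnr]; ring
        have t1 := mul_nonneg (by omega : (0:ℤ) ≤ (u:ℤ) + r - 1 - n) (by linarith : (0:ℤ) ≤ a (j-1) - a (j-2))
        linarith
    have hGmono : ∀ m n : ℕ, m < n → n < r + u → G m < G n := by
      intro m n hmn hn
      by_cases hmr : m < r <;> by_cases hnr : n < r
      · have e : G n - G m = ((n:ℤ) - m) * (a j - a (j-1)) := by
          simp only [hG, if_pos hmr, if_pos hnr]; ring
        have := mul_pos (by omega : (0:ℤ) < (n:ℤ) - m) (by linarith : (0:ℤ) < a j - a (j-1))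
        linarith
      · have e : G n - G m = ((n:ℤ) - r + 1) * (a (j-1) - a (j-2))
            + ((r:ℤ) - 1 - m) * (a j - a (j-1)) := by
          simp only [hG, if_pos hmr, if_neg hnr]; ring
        have t1 := mul_pos (by omega : (0:ℤ) < (n:ℤ) - r + 1) (by linarith : (0:ℤ) < a (j-1) - a (j-2))
        have t2 := mul_nonneg (by omega : (0:ℤ) ≤ (r:ℤ) - 1 - m) (by linarith : (0:ℤ) ≤ a j - a (j-1))
        linarith
      · omega
      · have e : G n - G m = ((n:ℤ) - m) * (a (j-1) - a (j-2)) := by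
          simp only [hG, if_neg hmr, if_neg hnr]; ring
        have := mul_pos (by omega : (0:ℤ) < (n:ℤ) - m) (by linarith : (0:ℤ) < a (j-1) - a (j-2))
        linarith
    set W : Finset ℤ := (range (r+u)).image G with hW
    have hWcard : W.card = r + u := by
      rw [hW, Finset.card_image_of_injOn, Finset.card_range]
      intro m hm n hn hmn
      simp at hm hn
      by_contra hne
      rcases Nat.lt_or_ge m n with hlt | hge
      · exact absurd hmn (hGmono m n hlt hn).ne
      · exact absurd hmn.symm (hGmono n m (by omega) hm).ne
    have hdisj : Disjoint V W := by
      rw [Finset.disjoint_right]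
      intro x hxW hxV
      simp [hW] at hxW
      obtain ⟨n, hn, hGn⟩ := hxW
      have h1 := (hVbd x hxV).2
      have h2 := hGgt n hn
      rw [hGn] at h2
      linarith
    have ha1le : a 1 ≤ a (j-2) := hle 1 (j-2) (by omega) (by omega)
    refine ⟨V ∪ W, ?_, ?_, ?_⟩
    · rw [Finset.card_union_of_disjoint hdisj, hVcard, hWcard]
      rw [show j+1-1 = (j-1)+1 from by omega, show j+1-3 = (j-3)+1 from by omega,
        Nat.mul_succ, Nat.mul_succ]
      ring
    · intro x hx
      have e1 : j + 1 - 1 = j := by omega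
      have e2 : j + 1 - 2 = j - 1 := by omega
      rw [e1, e2]
      rcases Finset.mem_union.mp hx with hx | hx
      · obtain ⟨hlo, hhi⟩ := hVbd x hx
        refine ⟨hlo, ?_⟩
        have t1 : (r:ℤ) * a (j-1) ≤ (r:ℤ) * a j := by
          apply mul_le_mul_of_nonneg_left (by linarith) (by positivity)
        have t2 : (u:ℤ) * a (j-2) ≤ (u:ℤ) * a (j-1) := by
          apply mul_le_mul_of_nonneg_left (by linarith) (by positivity)
        linarith
      · simp [hW] at hx
        obtain ⟨n, hn, hGn⟩ := hx
        constructor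
        · have h2 := hGgt n hn
          rw [hGn] at h2
          have t1 : (u:ℤ) * a 1 ≤ (u:ℤ) * a (j-2) := by
            apply mul_le_mul_of_nonneg_left ha1le (by positivity)
          have t2 : (0:ℤ) ≤ (r:ℤ) * a (j-1) := by positivity
          linarith
        · rw [← hGn]; exact hGle n hn
    · intro x hx
      rcases Finset.mem_union.mp hx with hx | hx
      · obtain ⟨c, h1, h2, h3, h4⟩ := hVmem x hx
        exact ⟨c, h1, fun i hi => h2 i (by omega), h3, h4⟩
      · simp [hW] at hx
        obtain ⟨n, hn, hGn⟩ := hx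
        by_cases hnr : n < r
        · set c : ℕ → ℕ := fun i => if i = j-2 then u else if i = j-1 then r-1-n else if i = j then n+1 else 0 with hc
          have hcp : c (j-2) = u := if_pos rfl
          have hcq : c (j-1) = r-1-n := by
            simp only [hc]
            rw [if_neg (by omega : ¬ (j-1 = j-2))]
            simp
          have hcl : c j = n+1 := by
            simp only [hc]
            rw [if_neg (by omega : ¬ (j = j-2)), if_neg (by omega : ¬ (j = j-1))]
            simp
          have hco : ∀ i, i ≠ j-2 → i ≠ j-1 → i ≠ j → c i = 0 := by
            intro i h1 h2 h3
            simp only [hc]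
            rw [if_neg h1, if_neg h2, if_neg h3]
          refine ⟨c, ?_, ?_, ?_, ?_⟩
          · intro i
            by_cases h1 : i = j-2
            · subst h1; rw [hcp]; omega
            by_cases h2 : i = j-1
            · subst h2; rw [hcq]; omega
            by_cases h3 : i = j
            · subst h3; rw [hcl]; omega
            rw [hco i h1 h2 h3]; omega
          · intro i hi
            exact hco i (by omega) (by omega) (by omega)
          · rw [sum_three_support' c (j-2) (j-1) j k (by omega) (by omega) (by omega) hco,
              hcp, hcq, hcl]
            omega
          · rw [sum_three_support' (fun i => (c i : ℤ) * a i) (j-2) (j-1) j k (by omega) (by omega) (by omega)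
              (by intro i h1 h2 h3; simp [hco i h1 h2 h3]),
              hcp, hcq, hcl, ← hGn]
            simp only [hG, if_pos hnr]
            have c1 : ((r - 1 - n : ℕ) : ℤ) = (r:ℤ) - 1 - n := by omega
            rw [c1]
            push_cast
            try ring
        · set c : ℕ → ℕ := fun i => if i = j-2 then u-(n-r+1) else if i = j-1 then n-r+1 else if i = j then r else 0 with hc
          have hcp : c (j-2) = u-(n-r+1) := if_pos rfl
          have hcq : c (j-1) = n-r+1 := by
            simp only [hc]
            rw [if_neg (by omega : ¬ (j-1 = j-2))]
            simp
          have hcl : c j = r := by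
            simp only [hc]
            rw [if_neg (by omega : ¬ (j = j-2)), if_neg (by omega : ¬ (j = j-1))]
            simp
          have hco : ∀ i, i ≠ j-2 → i ≠ j-1 → i ≠ j → c i = 0 := by
            intro i h1 h2 h3
            simp only [hc]
            rw [if_neg h1, if_neg h2, if_neg h3]
          refine ⟨c, ?_, ?_, ?_, ?_⟩
          · intro i
            by_cases h1 : i = j-2
            · subst h1; rw [hcp]; omega
            by_cases h2 : i = j-1
            · subst h2; rw [hcq]; omega
            by_cases h3 : i = j
            · subst h3; rw [hcl]
            rw [hco i h1 h2 h3]; omega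
          · intro i hi
            exact hco i (by omega) (by omega) (by omega)
          · rw [sum_three_support' c (j-2) (j-1) j k (by omega) (by omega) (by omega) hco,
              hcp, hcq, hcl]
            omega
          · rw [sum_three_support' (fun i => (c i : ℤ) * a i) (j-2) (j-1) j k (by omega) (by omega) (by omega)
              (by intro i h1 h2 h3; simp [hco i h1 h2 h3]),
              hcp, hcq, hcl, ← hGn]
            simp only [hG, if_neg hnr]
            have c1 : ((u - (n-r+1) : ℕ) : ℤ) = (u:ℤ) + (r:ℤ) - 1 - n := by omega
            have c2 : ((n - r + 1 : ℕ) : ℤ) = (n:ℤ) - r + 1 := by omega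
            rw [c1, c2]

theorem stmt_4 (k t r : ℕ) (A : Finset ℤ) (H : Finset ℕ) (h : ℕ → ℕ)
    (hk : 4 ≤ k) (hAcard : A.card = k) (hAnonneg : ∀ a ∈ A, 0 ≤ a) (h0A : (0 : ℤ) ∈ A)
    (hr1 : 1 ≤ r) (ht : 1 ≤ t) (hHcard : H.card = t) (hHpos : ∀ x ∈ H, 0 < x)
    (hmono : StrictMonoOn h (Set.Icc 1 t))
    (hHim : H = (Finset.Icc 1 t).image h)
    (hlow : (k - 2) * r ≤ h 1) (hmax : h t ≤ (k - 1) * r) :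
    ((h 1 / r : ℕ) : ℤ) * r * ((k : ℤ) - ((h 1 / r : ℕ) : ℤ))
      + ((h 1 : ℤ) - ((h 1 / r : ℕ) : ℤ) * r) * ((k : ℤ) - 2 * ((h 1 / r : ℕ) : ℤ) - 1)
      + t ≤ ((HSumset r H A).ncard : ℤ) := by
  classical
  -- sorted enumeration of A
  set a : ℕ → ℤ := fun n => if hn : n < k then ((A.orderIsoOfFin hAcard) ⟨n, hn⟩ : ℤ) else 0
    with haDef
  have hmono' : ∀ i j : ℕ, i < j → j < k → a i < a j := by
    intro i j hij hjk
    have hik : i < k := lt_trans hij hjk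
    simp only [haDef, dif_pos hik, dif_pos hjk]
    have := (A.orderIsoOfFin hAcard).strictMono (show (⟨i, hik⟩ : Fin k) < ⟨j, hjk⟩ from hij)
    exact_mod_cast this
  have hAim : A = (Finset.range k).image a := by
    ext x
    simp only [Finset.mem_image, Finset.mem_range]
    constructor
    · intro hx
      obtain ⟨i, hi⟩ := (A.orderIsoOfFin hAcard).surjective ⟨x, hx⟩
      refine ⟨i.1, i.2, ?_⟩
      have : a i.1 = ((A.orderIsoOfFin hAcard) i : ℤ) := by
        simp [haDef, i.2]
      rw [this, hi]
    · rintro ⟨i, hik, rfl⟩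
      have : a i = ((A.orderIsoOfFin hAcard) ⟨i, hik⟩ : ℤ) := by simp [haDef, hik]
      rw [this]
      exact Subtype.mem _
  have hinj : Set.InjOn a (Finset.range k) := by
    intro p hp q hq hpq
    simp only [Finset.coe_range, Set.mem_Iio] at hp hq
    by_contra hne
    rcases Nat.lt_or_ge p q with hlt | hge
    · exact absurd hpq (hmono' p q hlt hq).ne
    · exact absurd hpq.symm (hmono' q p (by omega) hp).ne
  have ha0 : a 0 = 0 := by
    have h0k : (0 : ℕ) < k := by omega
    have ha0m : a 0 ∈ A := by
      rw [hAim]; exact Finset.mem_image_of_mem a (Finset.mem_range.mpr h0k)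
    have h1 : 0 ≤ a 0 := hAnonneg _ ha0m
    have : (0 : ℤ) ∈ (Finset.range k).image a := by rw [← hAim]; exact h0A
    obtain ⟨i, hik, hi⟩ := Finset.mem_image.mp this
    rw [Finset.mem_range] at hik
    rcases Nat.eq_zero_or_pos i with h0 | h0
    · rw [h0] at hi; exact hi
    · have := hmono' 0 i h0 hik
      rw [hi] at this
      linarith
  have hnn : ∀ i, i < k → 0 ≤ a i := by
    intro i hik
    rcases Nat.eq_zero_or_pos i with h0 | h0
    · rw [h0, ha0]
    · have := hmono' 0 i h0 hik
      rw [ha0] at this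
      exact this.le
  have ha1pos : 0 < a 1 := by
    have := hmono' 0 1 (by omega) (by omega)
    rwa [ha0] at this
  -- facts about H
  have hmemH : ∀ i, 1 ≤ i → i ≤ t → h i ∈ H := by
    intro i h1i hit
    rw [hHim]
    exact Finset.mem_image_of_mem h (Finset.mem_Icc.mpr ⟨h1i, hit⟩)
  have h1H : h 1 ∈ H := hmemH 1 le_rfl ht
  have h1le : ∀ i, 1 ≤ i → i ≤ t → h 1 ≤ h i := by
    intro i h1i hit
    exact hmono.monotoneOn (Set.mem_Icc.mpr ⟨le_rfl, ht⟩) (Set.mem_Icc.mpr ⟨h1i, hit⟩) h1i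
  have hile : ∀ i, 1 ≤ i → i ≤ t → h i ≤ h t := by
    intro i h1i hit
    exact hmono.monotoneOn (Set.mem_Icc.mpr ⟨h1i, hit⟩) (Set.mem_Icc.mpr ⟨ht, le_rfl⟩) hit
  have h1lt : ∀ i, 2 ≤ i → i ≤ t → h 1 < h i := by
    intro i h2i hit
    exact hmono (Set.mem_Icc.mpr ⟨le_rfl, ht⟩) (Set.mem_Icc.mpr ⟨by omega, hit⟩) (by omega)
  have hh1le : h 1 ≤ (k - 1) * r := le_trans (hile 1 le_rfl ht) hmax
  -- product bookkeeping
  have hQ2 : (k - 1) * r = (k - 2) * r + r := by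
    conv_lhs => rw [show k - 1 = (k - 2) + 1 from by omega]
    rw [add_mul, one_mul]
  have hQ : k * r = (k - 2) * r + 2 * r := by
    conv_lhs => rw [show k = (k - 2) + 2 from by omega]
    rw [add_mul]
  have hdm : r * (h 1 / r) + h 1 % r = h 1 := Nat.div_add_mod (h 1) r
  have hmlb : k - 2 ≤ h 1 / r := (Nat.le_div_iff_mul_le (by omega)).mpr hlow
  have hmub : h 1 / r ≤ k - 1 := by
    have h1 : h 1 / r ≤ ((k - 1) * r) / r := Nat.div_le_div_right hh1le
    rwa [Nat.mul_div_cancel _ (by omega : 0 < r)] at h1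
  have hfin : (HSumset r H A).Finite := HS_fin r H A hAnonneg
  have hmodlt : h 1 % r < r := Nat.mod_lt _ (by omega)
  by_cases hcase : h 1 / r = k - 1
  · -- top case : h 1 = (k-1) * r, t = 1
    have hrm : r * (h 1 / r) = (k - 1) * r := by rw [hcase, mul_comm]
    have hh1 : h 1 = (k - 1) * r := by omega
    have ht1 : t = 1 := by
      by_contra hcon
      have := h1lt t (by omega) le_rfl
      omega
    obtain ⟨V, hVcard, hVbd, hVmem⟩ := chain0 r k a hr1 hmono' ha0 k (by omega) le_rfl
    set f : ℤ → ℤ := fun x => (r : ℤ) * (∑ i ∈ range k, a i) - x with hf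
    have hfinj : Function.Injective f := fun x y hxy => by
      simp only [hf] at hxy; linarith
    set W : Finset ℤ := V.image f with hW
    have hWcard : W.card = r * (k - 1) + 1 := by
      rw [hW, Finset.card_image_of_injective _ hfinj, hVcard]
    have hWsub : ↑W ⊆ HSumset r H A := by
      intro y hy
      simp only [hW, Finset.coe_image, Set.mem_image, Finset.mem_coe] at hy
      obtain ⟨x, hxV, rfl⟩ := hy
      obtain ⟨c, hc1, _, hc3, hc4⟩ := hVmem x hxV
      have hmem := compl_mem r k r A a hAim hinj c hc1 hc3
      have hkr : k * r - r = h 1 := by omega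
      rw [hkr] at hmem
      rw [HSumset]
      simp only [Set.mem_iUnion]
      refine ⟨h 1, h1H, ?_⟩
      rw [hf, ← hc4]
      exact hmem
    have hNle : r * (k - 1) + 1 ≤ (HSumset r H A).ncard := by
      rw [← hWcard, ← Set.ncard_coe_finset]
      exact Set.ncard_le_ncard hWsub hfin
    have hmz : ((h 1 / r : ℕ) : ℤ) = (k : ℤ) - 1 := by omega
    have hc1' : (h 1 : ℤ) = ((k : ℤ) - 1) * r := by
      rw [hh1]
      push_cast [Nat.cast_sub (show 1 ≤ k by omega)]
      ring
    have hNc : ((r * (k - 1) + 1 : ℕ) : ℤ) ≤ ((HSumset r H A).ncard : ℤ) := by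
      exact_mod_cast hNle
    have hNc' : ((r * (k - 1) + 1 : ℕ) : ℤ) = (r : ℤ) * ((k : ℤ) - 1) + 1 := by
      push_cast [Nat.cast_sub (show 1 ≤ k by omega)]
      ring
    rw [hmz, hc1', ht1]
    have : ((k : ℤ) - 1) * ↑r * (↑k - (↑k - 1))
        + (((k : ℤ) - 1) * ↑r - ((k : ℤ) - 1) * ↑r) * (↑k - 2 * (↑k - 1) - 1) + (1 : ℕ)
        = (r : ℤ) * ((k : ℤ) - 1) + 1 := by
      push_cast
      ring
    rw [this]
    have h9 := hNc
    rw [hNc'] at h9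
    linarith
  · -- main case : h 1 / r = k - 2
    have hme : h 1 / r = k - 2 := by omega
    set s : ℕ := h 1 % r with hs
    set u : ℕ := r - s with hu
    have hu1 : 1 ≤ u := by omega
    have hur : u ≤ r := by omega
    have hrm : r * (h 1 / r) = (k - 2) * r := by rw [hme, mul_comm]
    have hh1 : h 1 = (k - 2) * r + s := by omega
    obtain ⟨V, hVcard, hVbd, hVmem⟩ := chain1 r u k a hr1 hu1 hur hmono' ha0 k (by omega) le_rfl
    set f : ℤ → ℤ := fun x => (r : ℤ) * (∑ i ∈ range k, a i) - x with hf
    have hfinj : Function.Injective f := fun x y hxy => by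
      simp only [hf] at hxy; linarith
    set W : Finset ℤ := V.image f with hW
    have hWcard : W.card = r * (k - 1) + u * (k - 3) + 1 := by
      rw [hW, Finset.card_image_of_injective _ hfinj, hVcard]
    have hWsub : ↑W ⊆ HSumset r H A := by
      intro y hy
      simp only [hW, Finset.coe_image, Set.mem_image, Finset.mem_coe] at hy
      obtain ⟨x, hxV, rfl⟩ := hy
      obtain ⟨c, hc1, _, hc3, hc4⟩ := hVmem x hxV
      have hmem := compl_mem r k (r + u) A a hAim hinj c hc1 hc3
      have hkr : k * r - (r + u) = h 1 := by omega
      rw [hkr] at hmem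
      rw [HSumset]
      simp only [Set.mem_iUnion]
      refine ⟨h 1, h1H, ?_⟩
      rw [hf, ← hc4]
      exact hmem
    -- the extra t-1 elements
    set Y : Finset ℤ := (Finset.Icc 2 t).image
      (fun i => (r : ℤ) * (∑ i ∈ range k, a i) - (((k - 1) * r - h i : ℕ) : ℤ) * a 1) with hY
    have hwle : ∀ i, 2 ≤ i → i ≤ t → (k - 1) * r - h i ≤ r := by
      intro i h2i hit
      have := h1le i (by omega) hit
      omega
    have hwlt : ∀ i, 2 ≤ i → i ≤ t → (k - 1) * r - h i < u := by
      intro i h2i hit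
      have := h1lt i h2i hit
      have := hile i (by omega) hit
      omega
    have hYsub : ↑Y ⊆ HSumset r H A := by
      intro y hy
      simp only [hY, Finset.coe_image, Set.mem_image, Finset.mem_coe, Finset.mem_Icc] at hy
      obtain ⟨i, ⟨h2i, hit⟩, rfl⟩ := hy
      set w : ℕ := (k - 1) * r - h i with hwdef
      set c : ℕ → ℕ := fun i => if i = 0 then r else if i = 1 then w else 0 with hc
      have hcp : c 0 = r := if_pos rfl
      have hcq : c 1 = w := by
        simp only [hc]
        rw [if_neg (by omega : ¬ (1 = 0))]
        simp
      have hco : ∀ i, i ≠ 0 → i ≠ 1 → c i = 0 := by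
        intro i h1 h2
        simp only [hc]
        rw [if_neg h1, if_neg h2]
      have hcr : ∀ i, c i ≤ r := by
        intro i
        by_cases h1 : i = 0
        · subst h1; rw [hcp]
        by_cases h2 : i = 1
        · subst h2; rw [hcq]; exact hwle i h2i hit
        rw [hco i h1 h2]; omega
      have hcsum : ∑ i ∈ range k, c i = r + w :=
        (sum_two_support c 0 1 k (by omega) (by omega) hco).trans (by rw [hcp, hcq])
      have hcval : ∑ i ∈ range k, (c i : ℤ) * a i = (w : ℤ) * a 1 := by
        rw [sum_two_support (fun i => (c i : ℤ) * a i) 0 1 k (by omega) (by omega)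
          (by intro i h1 h2; simp [hco i h1 h2]), hcp, hcq, ha0]
        ring
      have hmem := compl_mem r k (r + w) A a hAim hinj c hcr hcsum
      have hkr : k * r - (r + w) = h i := by
        have h1 := hile i (by omega) hit
        have h2 := h1le i (by omega) hit
        omega
      rw [hkr, hcval] at hmem
      rw [HSumset]
      simp only [Set.mem_iUnion]
      exact ⟨h i, hmemH i (by omega) hit, hmem⟩
    have hinjY : Set.InjOn (fun i => (r : ℤ) * (∑ i ∈ range k, a i) - (((k - 1) * r - h i : ℕ) : ℤ) * a 1) ↑(Finset.Icc 2 t) := by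
      intro i hi j hj hij
      simp only [Finset.coe_Icc, Set.mem_Icc] at hi hj
      simp only at hij
      have hwi : (((k - 1) * r - h i : ℕ) : ℤ) * a 1 = (((k - 1) * r - h j : ℕ) : ℤ) * a 1 := by
        have := sub_right_injective hij
        exact this
      have hweq : (k - 1) * r - h i = (k - 1) * r - h j := by
        have := mul_right_cancel₀ (ne_of_gt ha1pos) hwi
        exact_mod_cast this
      have hi' := hile i (by omega) hi.2
      have hj' := hile j (by omega) hj.2
      have hhi : h i = h j := by omega
      exact hmono.injOn (Set.mem_Icc.mpr ⟨by omega, hi.2⟩) (Set.mem_Icc.mpr ⟨by omega, hj.2⟩) hhi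
    have hYcard : Y.card = t - 1 := by
      rw [hY, Finset.card_image_of_injOn hinjY, Nat.card_Icc]
      omega
    have hdisjWY : Disjoint W Y := by
      rw [Finset.disjoint_left]
      intro z hzW hzY
      simp only [hW, Finset.mem_image] at hzW
      obtain ⟨x, hxV, hfx⟩ := hzW
      simp only [hY, Finset.mem_image, Finset.mem_Icc] at hzY
      obtain ⟨i, ⟨h2i, hit⟩, hyi⟩ := hzY
      have hxlo := (hVbd x hxV).1
      have hwu := hwlt i h2i hit
      have hcast : (((k - 1) * r - h i : ℕ) : ℤ) < (u : ℤ) := by exact_mod_cast hwu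
      have : (((k - 1) * r - h i : ℕ) : ℤ) * a 1 < (u : ℤ) * a 1 :=
        mul_lt_mul_of_pos_right hcast ha1pos
      rw [← hyi, hf] at hfx
      simp only [hf] at hfx
      have : x = (((k - 1) * r - h i : ℕ) : ℤ) * a 1 := by linarith
      linarith
    have hNle : r * (k - 1) + u * (k - 3) + t ≤ (HSumset r H A).ncard := by
      have hcardU : (W ∪ Y).card = r * (k - 1) + u * (k - 3) + t := by
        rw [Finset.card_union_of_disjoint hdisjWY, hWcard, hYcard]
        omega
      rw [← hcardU, ← Set.ncard_coe_finset]
      apply Set.ncard_le_ncard _ hfin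
      rw [Finset.coe_union]
      exact Set.union_subset hWsub hYsub
    have hmz : ((h 1 / r : ℕ) : ℤ) = (k : ℤ) - 2 := by omega
    have hsz : (h 1 : ℤ) - ((k : ℤ) - 2) * r = (s : ℤ) := by
      have h2 : ((h 1 : ℕ) : ℤ) = ((k : ℤ) - 2) * (r : ℤ) + (s : ℤ) := by
        rw [hh1]
        push_cast [Nat.cast_sub (show 2 ≤ k by omega)]
        ring
      linarith
    have hNc : ((r * (k - 1) + u * (k - 3) + t : ℕ) : ℤ) ≤ ((HSumset r H A).ncard : ℤ) := by
      exact_mod_cast hNle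
    have hNc' : ((r * (k - 1) + u * (k - 3) + t : ℕ) : ℤ)
        = (r : ℤ) * ((k : ℤ) - 1) + ((r : ℤ) - s) * ((k : ℤ) - 3) + t := by
      rw [hu]
      push_cast [Nat.cast_sub (show 1 ≤ k by omega), Nat.cast_sub (show 3 ≤ k by omega),
        Nat.cast_sub (show s ≤ r by omega)]
      ring
    rw [hmz, hsz]
    have h9 := hNc
    rw [hNc'] at h9
    linarith
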